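/- Let K be a finite field with q elements and let ℓ be a prime dividing q − 1; if ℓ = 2, assume moreover that 4 divides q − 1. Write q − 1 = ℓ^e·ℓ' with ℓ' coprime to ℓ (so e ≥ 1, and e ≥ 2 when ℓ = 2). Let a be a generator of the ℓ-Sylow subgroup of the multiplicative group K^*, i.e. an element of K^* of multiplicative order ℓ^e. Then for every integer δ ≥ 1 the polynomial x^{ℓ^δ} − a is irreducible in K[x]. -/

import Mathlib

open Finset in
lemma lte_key (ℓ : ℕ) (hℓ : ℓ.Prime) : ∀ δ : ℕ, ∀ (q : ℤ) (e : ℕ), 1 ≤ e → (ℓ = 2 → 2 ≤ e) →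
    (ℓ : ℤ) ^ e ∣ q - 1 → ¬ (ℓ : ℤ) ^ (e + 1) ∣ q - 1 →
    ∀ d : ℕ, (ℓ : ℤ) ^ (e + δ) ∣ q ^ d - 1 → ℓ ^ δ ∣ d := by
  have hℓZ : Prime (ℓ : ℤ) := Nat.prime_iff_prime_int.mp hℓ
  have hℓ0 : (ℓ : ℤ) ≠ 0 := by exact_mod_cast hℓ.ne_zero
  intro δ
  induction δ with
  | zero => intro q e _ _ _ _ d _; simp
  | succ δ IH =>
    intro q e he he2 hdvd hndvd d hd
    obtain ⟨u, hu⟩ := hdvd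
    have hu' : ¬ (ℓ : ℤ) ∣ u := by
      rintro ⟨v, hv⟩
      exact hndvd ⟨v, by rw [hu, hv, pow_succ]; ring⟩
    have hq1 : (ℓ : ℤ) ∣ q - 1 :=
      dvd_trans (dvd_pow_self _ (by omega : e ≠ 0)) ⟨u, hu⟩
    -- sums of powers of q are ≡ (number of terms) mod ℓ
    have hcong : ∀ n : ℕ, (ℓ : ℤ) ∣ (∑ i ∈ range n, q ^ i) - n := by
      intro n
      have h : (∑ i ∈ range n, q ^ i) - (n : ℤ) = ∑ i ∈ range n, (q ^ i - 1) := by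
        rw [Finset.sum_sub_distrib]; simp
      rw [h]
      refine Finset.dvd_sum fun i _ => ?_
      exact dvd_trans hq1 (by simpa using sub_dvd_pow_sub_pow q 1 i)
    -- Step 1: ℓ ∣ d
    have hld : ℓ ∣ d := by
      by_contra hnd
      have h2 : (ℓ : ℤ) ^ (e + 1) ∣ q ^ d - 1 :=
        dvd_trans (pow_dvd_pow _ (by omega)) hd
      rw [← geom_sum_mul, hu] at h2
      obtain ⟨w, hw⟩ := h2
      have h3 : (ℓ : ℤ) ∣ (∑ i ∈ range d, q ^ i) * u := by
        refine ⟨w, mul_left_cancel₀ (pow_ne_zero e hℓ0) ?_⟩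
        rw [pow_succ] at hw
        rw [show (ℓ:ℤ)^e * ((∑ i ∈ range d, q ^ i) * u)
            = (∑ i ∈ range d, q ^ i) * ((ℓ:ℤ)^e * u) by ring, hw]
        ring
      rcases hℓZ.dvd_mul.mp h3 with h | h
      · have hdd : (ℓ : ℤ) ∣ (d : ℤ) := (dvd_sub_right h).mp (hcong d)
        exact hnd (by exact_mod_cast hdd)
      · exact hu' h
    obtain ⟨m, hm⟩ := hld
    -- Step 2: exact divisibility for Q = q ^ ℓ
    set T : ℤ := ∑ i ∈ range ℓ, q ^ i with hTdef
    have hQ1 : q ^ ℓ - 1 = ((ℓ:ℤ)^e * u) * T := by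
      rw [← geom_sum_mul, hu, ← hTdef]; ring
    have hT2 : (ℓ : ℤ) ^ 2 ∣ T - ℓ := by
      have hsplit : T - (ℓ:ℤ) = ∑ i ∈ range ℓ, (q ^ i - 1) := by
        rw [hTdef, Finset.sum_sub_distrib]; simp
      rcases Nat.lt_or_ge e 2 with he1 | he2
      · -- e = 1, so ℓ is odd
        have hℓodd : Odd ℓ := hℓ.odd_of_ne_two (fun h => by omega)
        have hgaussN : ℓ ∣ ∑ i ∈ range ℓ, i := by
          have h1 : (∑ i ∈ range ℓ, i) * 2 = ℓ * (ℓ - 1) := Finset.sum_range_id_mul_two ℓ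
          have hcop2 : ℓ.Coprime 2 := hℓodd.coprime_two_right
          exact hcop2.dvd_of_dvd_mul_right (h1 ▸ Dvd.intro _ rfl)
        have hgauss : (ℓ : ℤ) ∣ ∑ i ∈ range ℓ, (i : ℤ) := by
          have : ((∑ i ∈ range ℓ, i : ℕ) : ℤ) = ∑ i ∈ range ℓ, (i : ℤ) := by push_cast; rfl
          exact this ▸ Int.natCast_dvd_natCast.mpr hgaussN
        have hstep : ∀ i ∈ range ℓ, (ℓ:ℤ)^2 ∣ (q ^ i - 1) - (q - 1) * i := by
          intro i _
          have h : (q ^ i - 1) - (q - 1) * i = (q - 1) * ((∑ j ∈ range i, q ^ j) - i) := by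
            rw [← geom_sum_mul q i]; ring
          rw [h, sq]
          exact mul_dvd_mul hq1 (hcong i)
        have hsum : (ℓ:ℤ)^2 ∣ (∑ i ∈ range ℓ, (q ^ i - 1)) - (q - 1) * (∑ i ∈ range ℓ, (i:ℤ)) := by
          rw [Finset.mul_sum, ← Finset.sum_sub_distrib]
          exact Finset.dvd_sum hstep
        have hlast : (ℓ:ℤ)^2 ∣ (q - 1) * (∑ i ∈ range ℓ, (i:ℤ)) := by
          rw [sq]; exact mul_dvd_mul hq1 hgauss
        rw [hsplit]
        simpa using dvd_add hsum hlast
      · -- e ≥ 2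
        rw [hsplit]
        refine Finset.dvd_sum fun i _ => ?_
        rw [show q ^ i - 1 = (∑ j ∈ range i, q ^ j) * (q - 1)
          from (geom_sum_mul q i).symm]
        exact Dvd.dvd.mul_left (dvd_trans (pow_dvd_pow _ he2) ⟨u, hu⟩) _
    -- extract: T = ℓ * t with ℓ ∤ t
    have hℓT : (ℓ:ℤ) ∣ T := by
      have h1 : (ℓ:ℤ) ∣ T - ℓ := dvd_trans (dvd_pow_self _ two_ne_zero) hT2
      have h2 : T = (T - ℓ) + ℓ := by ring
      rw [h2]; exact dvd_add h1 dvd_rfl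
    obtain ⟨t, ht⟩ := hℓT
    have hnt : ¬ (ℓ:ℤ) ∣ t := by
      rintro ⟨s, hs⟩
      have hT2' : (ℓ:ℤ)^2 ∣ T := by rw [ht, hs, sq]; exact ⟨s, by ring⟩
      have hℓdvd : (ℓ:ℤ)^2 ∣ (ℓ:ℤ) := by
        have h3 := dvd_sub hT2' hT2
        simpa using h3
      have hle := Int.le_of_dvd (by exact_mod_cast hℓ.pos) hℓdvd
      have h2 := hℓ.two_le
      have : (2:ℤ) ≤ (ℓ:ℤ) := by exact_mod_cast h2
      nlinarith
    -- Q - 1 exactly divisible by ℓ^(e+1)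
    have hd1 : (ℓ:ℤ)^(e+1) ∣ q ^ ℓ - 1 := ⟨u * t, by rw [hQ1, ht, pow_succ]; ring⟩
    have hd2 : ¬ (ℓ:ℤ)^(e+1+1) ∣ q ^ ℓ - 1 := by
      rintro ⟨w, hw⟩
      have heq : (ℓ:ℤ)^(e+1) * (u * t) = (ℓ:ℤ)^(e+1) * ((ℓ:ℤ) * w) := by
        rw [show (ℓ:ℤ)^(e+1) * (u*t) = q ^ ℓ - 1 by rw [hQ1, ht, pow_succ]; ring, hw, pow_succ]
        ring
      rcases hℓZ.dvd_mul.mp ⟨w, mul_left_cancel₀ (pow_ne_zero _ hℓ0) heq⟩ with h | h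
      · exact hu' h
      · exact hnt h
    -- apply IH
    have hIH := IH (q ^ ℓ) (e + 1) (by omega) (fun _ => by omega) hd1 hd2 m
      (by rw [← pow_mul, ← hm]
          exact dvd_trans (pow_dvd_pow _ (by omega)) hd)
    rw [hm, pow_succ']
    exact mul_dvd_mul_left ℓ hIH

open Polynomial IntermediateField in
/-- Let `K` be a finite field with `q` elements, `ℓ` a prime dividing
`q − 1` (with `4 ∣ q − 1` if `ℓ = 2`). Write `q − 1 = ℓ^e·ℓ'` with `ℓ'` coprime to `ℓ`, and
let `a ∈ K^*` have multiplicative order `ℓ^e`. Then `x^{ℓ^δ} − a` is irreducible in `K[x]`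
for every `δ ≥ 1`. -/
theorem X_pow_sub_C_irreducible_of_sylow_generator
    (K : Type*) [Field K] [Fintype K] (q : ℕ) (hq : Fintype.card K = q)
    (ℓ : ℕ) (hℓ : ℓ.Prime) (hdvd : ℓ ∣ q - 1) (h2 : ℓ = 2 → 4 ∣ q - 1)
    (e ℓ' : ℕ) (hfact : q - 1 = ℓ ^ e * ℓ') (hcop : ¬ ℓ ∣ ℓ')
    (a : K) (ha : orderOf a = ℓ ^ e)
    (δ : ℕ) (hδ : 1 ≤ δ) :
    Irreducible (Polynomial.X ^ (ℓ ^ δ) - Polynomial.C a) := by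
  classical
  have hℓ2 : 2 ≤ ℓ := hℓ.two_le
  have hq2 : 2 ≤ q := hq ▸ Fintype.one_lt_card
  -- basic exponent facts
  have he1 : 1 ≤ e := by
    rcases Nat.eq_zero_or_pos e with h0 | h; swap; · exact h
    rw [h0, pow_zero, one_mul] at hfact
    exact absurd (hfact ▸ hdvd) hcop
  have he2 : ℓ = 2 → 2 ≤ e := by
    intro h2'
    subst h2'
    by_contra hlt
    have he : e = 1 := by omega
    have h4 := h2 rfl
    rw [hfact, he, pow_one] at h4
    omega
  have hndvd : ¬ ℓ ^ (e + 1) ∣ q - 1 := by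
    rw [hfact, pow_succ]
    intro h
    exact hcop ((Nat.mul_dvd_mul_iff_left (Nat.pow_pos hℓ.pos : 0 < ℓ ^ e)).mp h)
  set n := ℓ ^ δ with hn
  have hn0 : n ≠ 0 := pow_ne_zero δ hℓ.ne_zero
  -- pass to the algebraic closure
  set L := AlgebraicClosure K
  set a' := algebraMap K L a with ha'def
  have hinj : Function.Injective (algebraMap K L) := (algebraMap K L).injective
  have ha' : orderOf a' = ℓ ^ e :=
    (orderOf_injective (algebraMap K L).toMonoidHom hinj a).trans ha
  obtain ⟨r, hr⟩ := IsAlgClosed.exists_pow_nat_eq a' (Nat.pos_of_ne_zero hn0)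
  -- order of r is ℓ ^ (e + δ)
  have hrpow : r ^ ℓ ^ (e + δ) = 1 := by
    have : r ^ ℓ ^ (e + δ) = (r ^ n) ^ ℓ ^ e := by
      rw [← pow_mul, hn, ← pow_add, Nat.add_comm δ e]
    rw [this, hr, ← ha', pow_orderOf_eq_one]
  have hordr : orderOf r = ℓ ^ (e + δ) := by
    have hdvd1 : orderOf r ∣ ℓ ^ (e + δ) := orderOf_dvd_of_pow_eq_one hrpow
    obtain ⟨f, hf, hfr⟩ := (Nat.dvd_prime_pow hℓ).mp hdvd1
    rcases Nat.lt_or_ge f (e + δ) with hlt | hge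
    · exfalso
      have h1 : r ^ ℓ ^ (e + δ - 1) = 1 := by
        have : orderOf r ∣ ℓ ^ (e + δ - 1) := hfr ▸ pow_dvd_pow ℓ (by omega)
        exact orderOf_dvd_iff_pow_eq_one.mp this
      have h2 : a' ^ ℓ ^ (e - 1) = 1 := by
        rw [← hr, ← pow_mul, hn, ← pow_add]
        rw [show δ + (e - 1) = e + δ - 1 by omega]
        exact h1
      have h3 : ℓ ^ e ∣ ℓ ^ (e - 1) := ha' ▸ orderOf_dvd_of_pow_eq_one h2
      have := (Nat.pow_dvd_pow_iff_le_right (by omega : 1 < ℓ)).mp h3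
      omega
    · rw [hfr]
      congr 1
      omega
  have hr0 : r ≠ 0 := by
    intro h0
    rw [h0, zero_pow (pow_ne_zero _ hℓ.ne_zero)] at hrpow
    exact zero_ne_one hrpow
  -- the subfield K(r)
  have hint : IsIntegral K r := Algebra.IsIntegral.isIntegral r
  haveI : FiniteDimensional K K⟮r⟯ := IntermediateField.adjoin.finiteDimensional hint
  haveI : Finite K⟮r⟯ := Module.finite_of_finite K
  haveI : Fintype K⟮r⟯ := Fintype.ofFinite _
  set d := Module.finrank K K⟮r⟯ with hd
  have hcard : Fintype.card K⟮r⟯ = q ^ d := by rw [← hq]; exact Module.card_eq_pow_finrank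
  -- order of the generator inside K(r)
  set g := AdjoinSimple.gen K r with hg
  have hmapg : algebraMap K⟮r⟯ L g = r := AdjoinSimple.algebraMap_gen K r
  have hordg : orderOf g = ℓ ^ (e + δ) := by
    have h2 : orderOf ((algebraMap K⟮r⟯ L) g) = orderOf g :=
      orderOf_injective (algebraMap K⟮r⟯ L).toMonoidHom (algebraMap K⟮r⟯ L).injective g
    rw [hmapg] at h2
    rw [← h2]; exact hordr
  have hg0 : g ≠ 0 := by
    intro h0
    rw [← hmapg, h0, map_zero] at hr0
    exact hr0 rfl
  have hdvdcard : ℓ ^ (e + δ) ∣ q ^ d - 1 := by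
    rw [← hordg, ← hcard]
    exact orderOf_dvd_of_pow_eq_one (FiniteField.pow_card_sub_one_eq_one g hg0)
  -- apply the key number-theoretic lemma
  have hdZ : (ℓ : ℤ) ^ (e + δ) ∣ (q : ℤ) ^ d - 1 := by
    have h1 : 1 ≤ q ^ d := Nat.one_le_pow _ _ (by omega)
    have := Int.natCast_dvd_natCast.mpr hdvdcard
    push_cast [Nat.cast_sub h1] at this
    exact_mod_cast this
  have heZ : (ℓ : ℤ) ^ e ∣ (q : ℤ) - 1 := by
    have := Int.natCast_dvd_natCast.mpr (⟨ℓ', hfact⟩ : ℓ ^ e ∣ q - 1)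
    push_cast [Nat.cast_sub (by omega : 1 ≤ q)] at this
    exact_mod_cast this
  have hneZ : ¬ (ℓ : ℤ) ^ (e + 1) ∣ (q : ℤ) - 1 := by
    intro h
    apply hndvd
    have h' : ((ℓ ^ (e+1) : ℕ) : ℤ) ∣ ((q - 1 : ℕ) : ℤ) := by
      push_cast [Nat.cast_sub (by omega : 1 ≤ q)]
      exact_mod_cast h
    exact_mod_cast h'
  have hδd : ℓ ^ δ ∣ d := lte_key ℓ hℓ δ q e he1 he2 heZ hneZ d hdZ
  -- d = n
  have hd_pos : 0 < d := Module.finrank_pos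
  have haev : (Polynomial.aeval r) (X ^ n - C a) = 0 := by
    rw [map_sub, map_pow, aeval_X, aeval_C, hr, ha'def, sub_self]
  have hmindvd : minpoly K r ∣ X ^ n - C a := minpoly.dvd K r haev
  have hple : d ≤ n := by
    rw [hd, IntermediateField.adjoin.finrank hint]
    calc (minpoly K r).natDegree ≤ (X ^ n - C a : K[X]).natDegree :=
          Polynomial.natDegree_le_of_dvd hmindvd (X_pow_sub_C_ne_zero (Nat.pos_of_ne_zero hn0) a)
      _ = n := natDegree_X_pow_sub_C
  have hdeq : d = n := Nat.le_antisymm hple (Nat.le_of_dvd hd_pos hδd)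
  -- conclude
  have hdeg : (minpoly K r).natDegree = n := by
    rw [← IntermediateField.adjoin.finrank hint, ← hd, hdeq]
  have hassoc : Associated (minpoly K r) (X ^ n - C a) :=
    associated_of_dvd_of_natDegree_le hmindvd (X_pow_sub_C_ne_zero (Nat.pos_of_ne_zero hn0) a)
      (by rw [natDegree_X_pow_sub_C, hdeg])
  exact hassoc.irreducible (minpoly.irreducible hint)
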